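/- Let d ≥ 1, z ∈ EuclideanSpace ℝ (Fin d), and let (a_j)_{j ∈ ℕ} be reals with 0 ≤ a_j ≤ 1. Define F(λ) = ∑'_{j ∈ ℕ} c_j(λ) * a_j with c_j(λ) = (λ/2)^j * Real.exp(-λ/2)/j!, and let μ ∈ EuclideanSpace ℝ (Fin d) be such that F(‖μ - z‖²) < 1. Then the function G(μ) = Real.log (1 - F(‖μ - z‖²)) is differentiable at μ and its gradient at μ equals ((∑'_{j ∈ ℕ} c_j(λ) * (a_{j+1} - a_j)) / (F(λ) - 1)) • (μ - z), where λ = ‖μ - z‖². That is, the DPS guidance term ∇_μ log P(X ∉ B_r(z)) for X ~ N(μ, I_d) has the form ω(λ, r) • (μ - z) with weight ω(λ, r) = (2/(F_{χ²_{nc,d}(λ)}(r²) - 1)) · ∂F_{χ²_{nc,d}(λ)}/∂λ (r²). -/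

import Mathlib

/-- The Poisson mixture weight `c_j(λ) = (λ/2)^j e^{-λ/2}/j!`. -/
noncomputable def poissonWeight (j : ℕ) (l : ℝ) : ℝ :=
  (l / 2) ^ j * Real.exp (-l / 2) / (Nat.factorial j)

/-- The DPS guidance term `∇_μ log P(X ∉ B_r(z))` for `X ~ N(μ, I_d)` has the radial form
`ω • (μ - z)`, where the survival probability is written via the noncentral chi-square CDF
`F(λ) = Σ_j c_j(λ) a_j` at `λ = ‖μ - z‖²`. -/

lemma expser_summable (x : ℝ) (c : ℝ) : Summable (fun j : ℕ => x ^ j / (Nat.factorial j) * c) :=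
  (Real.summable_pow_div_factorial x).mul_right c

lemma pw_abs_le {l R : ℝ} (hR : |l| ≤ R) (j : ℕ) :
    |poissonWeight j l| ≤ (R/2) ^ j / (Nat.factorial j) * Real.exp (R/2) := by
  unfold poissonWeight
  rw [abs_div, abs_mul, abs_pow, Nat.abs_cast, div_mul_eq_mul_div, mul_div_assoc,
    mul_div_assoc]
  have h0 : (0:ℝ) ≤ R := le_trans (abs_nonneg l) hR
  gcongr
  · rw [abs_div, abs_two]; linarith
  · rw [abs_of_pos (Real.exp_pos _)]
    apply Real.exp_le_exp.2
    have := (abs_le.1 hR).1; linarith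

lemma pw_summable_mul (l : ℝ) (b : ℕ → ℝ) (hb : ∀ j, |b j| ≤ 1) :
    Summable (fun j => poissonWeight j l * b j) := by
  apply Summable.of_norm_bounded (expser_summable (|l|/2) (Real.exp (|l|/2)))
  intro j
  rw [Real.norm_eq_abs, abs_mul]
  calc |poissonWeight j l| * |b j|
      ≤ ((|l|/2) ^ j / (Nat.factorial j) * Real.exp (|l|/2)) * 1 := by
        apply mul_le_mul (pw_abs_le le_rfl j) (hb j) (abs_nonneg _)
        positivity
    _ = _ := by ring

/-- the pointwise derivative of `t ↦ poissonWeight j t * b j`. -/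
noncomputable def pwDeriv (b : ℕ → ℝ) (j : ℕ) (t : ℝ) : ℝ :=
  ((j * (t/2) ^ (j-1) * (1/2)) * Real.exp (-t/2) + (t/2) ^ j * (Real.exp (-t/2) * (-(1/2)))) /
    (Nat.factorial j) * b j

lemma pw_hasDerivAt (b : ℕ → ℝ) (j : ℕ) (t : ℝ) :
    HasDerivAt (fun s => poissonWeight j s * b j) (pwDeriv b j t) t := by
  have h1 : HasDerivAt (fun s : ℝ => (s/2) ^ j) ((j : ℝ) * (t/2) ^ (j-1) * (1/2)) t :=
    ((hasDerivAt_id t).div_const 2).pow j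
  have h2 : HasDerivAt (fun s : ℝ => Real.exp (-s/2)) (Real.exp (-t/2) * (-(1/2))) t := by
    have : HasDerivAt (fun s : ℝ => -s/2) (-(1/2)) t := by
      have h := ((hasDerivAt_id t).neg.div_const 2)
      norm_num at h
      simpa using h
    exact this.exp
  exact ((h1.mul h2).div_const _).mul_const _

lemma shifted_expser_summable (x : ℝ) (hx : 0 ≤ x) :
    Summable (fun j : ℕ => x ^ (j-1) / (Nat.factorial (j-1))) := by
  apply (summable_nat_add_iff 1).1
  simpa using Real.summable_pow_div_factorial x

lemma j_fact_le (x : ℝ) (hx : 0 ≤ x) (j : ℕ) :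
    (j : ℝ) * x ^ (j-1) / (Nat.factorial j) ≤ x ^ (j-1) / (Nat.factorial (j-1)) := by
  cases j with
  | zero => simp
  | succ n =>
    rw [Nat.add_sub_cancel, Nat.factorial_succ]
    push_cast
    rw [mul_div_mul_left _ _ (show ((n:ℝ)+1) ≠ 0 by positivity)]

lemma series_hasDerivAt (b : ℕ → ℝ) (hb : ∀ j, |b j| ≤ 1) (l : ℝ) :
    HasDerivAt (fun t => ∑' j, poissonWeight j t * b j)
      ((1/2) * ∑' j, poissonWeight j l * (b (j+1) - b j)) l := by
  set R : ℝ := |l| + 1 with hR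
  set x : ℝ := R / 2 with hx
  have hx0 : 0 ≤ x := by positivity
  have key : HasDerivAt (fun t => ∑' j, poissonWeight j t * b j)
      (∑' j, pwDeriv b j l) l := by
    apply hasDerivAt_tsum_of_isPreconnected
      (u := fun j => (x ^ (j-1) / (Nat.factorial (j-1)) + x ^ j / (Nat.factorial j)) *
        (Real.exp x / 2))
      (((shifted_expser_summable x hx0).add (Real.summable_pow_div_factorial x)).mul_right _)
      (isOpen_Ioo (a := -R) (b := R)) (isPreconnected_Ioo)
      (fun j y _ => pw_hasDerivAt b j y) ?_ ?_ (pw_summable_mul l b hb) ?_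
    · intro j y hy
      have hyR : |y| ≤ R := abs_le.2 ⟨le_of_lt hy.1, le_of_lt hy.2⟩
      have hy2 : |y / 2| ≤ x := by rw [abs_div, abs_two, hx]; linarith
      have hexp : Real.exp (-y/2) ≤ Real.exp x := by
        apply Real.exp_le_exp.2
        have := (abs_le.1 hyR).1
        rw [hx]; linarith
      have hA : |(↑j * (y/2) ^ (j-1) * (1/2)) * Real.exp (-y/2)|
          ≤ ↑j * x ^ (j-1) * (1/2) * Real.exp x := by
        rw [abs_mul, abs_mul, abs_mul, abs_pow, Nat.abs_cast, abs_of_pos (Real.exp_pos _)]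
        have : |(1:ℝ)/2| = 1/2 := by norm_num
        rw [this]
        gcongr
      have hB : |(y/2) ^ j * (Real.exp (-y/2) * (-(1/2)))| ≤ x ^ j * (Real.exp x * (1/2)) := by
        rw [abs_mul, abs_pow, abs_mul, abs_of_pos (Real.exp_pos _), abs_neg]
        have : |(1:ℝ)/2| = 1/2 := by norm_num
        rw [this]
        gcongr
      have hfac : (0:ℝ) < (Nat.factorial j : ℝ) := by positivity
      calc ‖pwDeriv b j y‖
          = |((↑j * (y/2) ^ (j-1) * (1/2)) * Real.exp (-y/2)
              + (y/2) ^ j * (Real.exp (-y/2) * (-(1/2))))| / (Nat.factorial j) * |b j| := by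
            rw [pwDeriv, Real.norm_eq_abs, abs_mul, abs_div, Nat.abs_cast]
        _ ≤ ((↑j * x ^ (j-1) * (1/2) * Real.exp x) + x ^ j * (Real.exp x * (1/2)))
              / (Nat.factorial j) * 1 := by
            gcongr
            · exact (abs_add_le _ _).trans (add_le_add hA hB)
            · exact hb j
        _ = (↑j * x ^ (j-1) / (Nat.factorial j)) * (Real.exp x / 2)
              + (x ^ j / (Nat.factorial j)) * (Real.exp x / 2) := by ring
        _ ≤ (x ^ (j-1) / (Nat.factorial (j-1))) * (Real.exp x / 2)
              + (x ^ j / (Nat.factorial j)) * (Real.exp x / 2) := by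
            exact add_le_add
              (mul_le_mul_of_nonneg_right (j_fact_le x hx0 j) (by positivity : (0:ℝ) ≤ Real.exp x / 2)) le_rfl
        _ = _ := by ring
    · show l ∈ Set.Ioo (-R) R
      constructor <;> [linarith [neg_abs_le l]; linarith [le_abs_self l]]
    · show l ∈ Set.Ioo (-R) R
      constructor <;> [linarith [neg_abs_le l]; linarith [le_abs_self l]]
  convert key using 1
  -- value of the derivative series
  set e : ℕ → ℝ := fun j => if j = 0 then 0 else poissonWeight (j-1) l * b j with he
  have hse : Summable e := by
    apply (summable_nat_add_iff 1).1
    simpa [he] using pw_summable_mul l (fun n => b (n+1)) (fun n => hb (n+1))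
  have hs1 : Summable (fun j => poissonWeight j l * b (j+1)) :=
    pw_summable_mul l (fun n => b (n+1)) (fun n => hb (n+1))
  have hs0 : Summable (fun j => poissonWeight j l * b j) := pw_summable_mul l b hb
  have claim1 : ∀ j, pwDeriv b j l = (1/2) * (e j - poissonWeight j l * b j) := by
    intro j
    cases j with
    | zero => simp [pwDeriv, poissonWeight, he]; ring
    | succ n =>
      have hfac : ((Nat.factorial (n+1) : ℝ)) = (n+1) * Nat.factorial n := by
        rw [Nat.factorial_succ]; push_cast; ring
      simp only [pwDeriv, poissonWeight, he, Nat.add_sub_cancel, if_neg (Nat.succ_ne_zero n), hfac]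
      have h1 : ((Nat.factorial n : ℝ)) ≠ 0 := by positivity
      have h2 : ((n:ℝ) + 1) ≠ 0 := by positivity
      field_simp
      push_cast
      ring
  have claim3 : ∑' j, e j = ∑' j, poissonWeight j l * b (j+1) := by
    rw [Summable.tsum_eq_zero_add hse]
    simp [he]
  calc (1/2) * ∑' j, poissonWeight j l * (b (j+1) - b j)
      = (1/2) * ∑' j, (poissonWeight j l * b (j+1) - poissonWeight j l * b j) := by
        congr 1; exact tsum_congr fun j => by ring
    _ = (1/2) * ((∑' j, poissonWeight j l * b (j+1)) - ∑' j, poissonWeight j l * b j) := by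
        rw [Summable.tsum_sub hs1 hs0]
    _ = (1/2) * ((∑' j, e j) - ∑' j, poissonWeight j l * b j) := by rw [claim3]
    _ = ∑' j, (1/2) * (e j - poissonWeight j l * b j) := by
        rw [tsum_mul_left, Summable.tsum_sub hse hs0]
    _ = ∑' j, pwDeriv b j l := tsum_congr fun j => (claim1 j).symm


theorem dps_guidance_radial (d : ℕ) (hd : 1 ≤ d) (z : EuclideanSpace ℝ (Fin d))
    (a : ℕ → ℝ) (ha : ∀ j, 0 ≤ a j ∧ a j ≤ 1) (μ : EuclideanSpace ℝ (Fin d))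
    (hF : (∑' j : ℕ, poissonWeight j (‖μ - z‖ ^ 2) * a j) < 1) :
    HasGradientAt
      (fun ν : EuclideanSpace ℝ (Fin d) =>
        Real.log (1 - ∑' j : ℕ, poissonWeight j (‖ν - z‖ ^ 2) * a j))
      (((∑' j : ℕ, poissonWeight j (‖μ - z‖ ^ 2) * (a (j + 1) - a j)) /
          ((∑' j : ℕ, poissonWeight j (‖μ - z‖ ^ 2) * a j) - 1)) • (μ - z)) μ := by
  have hb : ∀ j, |a j| ≤ 1 := fun j => abs_le.2 ⟨by linarith [(ha j).1], (ha j).2⟩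
  set lam : ℝ := ‖μ - z‖ ^ 2 with hlam
  set S : ℝ := ∑' j : ℕ, poissonWeight j lam * (a (j + 1) - a j) with hS
  set Fl : ℝ := ∑' j : ℕ, poissonWeight j lam * a j with hFl
  have hne : (1 : ℝ) - Fl ≠ 0 := by
    have : (0:ℝ) < 1 - Fl := by linarith
    exact ne_of_gt this
  have hderiv : HasDerivAt (fun t => ∑' j : ℕ, poissonWeight j t * a j) ((1/2) * S) lam :=
    series_hasDerivAt a hb lam
  have hlog : HasDerivAt (fun t => Real.log (1 - ∑' j : ℕ, poissonWeight j t * a j))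
      ((1 - Fl)⁻¹ * (0 - (1/2) * S)) lam := by
    have h1 : HasDerivAt (fun t => 1 - ∑' j : ℕ, poissonWeight j t * a j) (0 - (1/2) * S) lam :=
      (hasDerivAt_const lam (1:ℝ)).sub hderiv
    exact (Real.hasDerivAt_log hne).comp lam h1
  have hq : HasFDerivAt (fun ν : EuclideanSpace ℝ (Fin d) => ‖ν - z‖ ^ 2)
      ((2:ℝ) • (innerSL ℝ (μ - z))) μ := by
    have h := ((hasFDerivAt_id μ).sub_const z).norm_sq
    refine h.congr_fderiv ?_
    ext w
    simp [two_smul]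
  have hcomp : HasFDerivAt
      (fun ν : EuclideanSpace ℝ (Fin d) =>
        Real.log (1 - ∑' j : ℕ, poissonWeight j (‖ν - z‖ ^ 2) * a j))
      (((1 - Fl)⁻¹ * (0 - (1/2) * S)) • ((2:ℝ) • (innerSL ℝ (μ - z)))) μ :=
    by have := HasDerivAt.comp_hasFDerivAt (h₂ := fun t => Real.log (1 - ∑' j : ℕ, poissonWeight j t * a j)) μ hlog hq; exact this
  rw [hasGradientAt_iff_hasFDerivAt]
  have heq : (InnerProductSpace.toDual ℝ (EuclideanSpace ℝ (Fin d)))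
      ((S / (Fl - 1)) • (μ - z))
      = ((1 - Fl)⁻¹ * (0 - (1/2) * S)) • ((2:ℝ) • (innerSL ℝ (μ - z))) := by
    apply ContinuousLinearMap.ext
    intro w
    simp only [InnerProductSpace.toDual_apply_apply, ContinuousLinearMap.coe_smul', Pi.smul_apply,
      innerSL_apply_apply, smul_eq_mul, real_inner_smul_left]
    have hne' : Fl - 1 ≠ 0 := by intro h; apply hne; linarith [sub_eq_zero.1 h]
    field_simp
    ring
  rw [heq]
  exact hcomp
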